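/- The map ψ_W: ℝ × T*S^k × ℝ^{2(n-k-1)} → S_{-1}, (ζ, q, p, x, y) ↦ (x, y; ζq + p, q), where S_{-1} = {(x,y,z,w) : |w|² = 1} ⊂ ℝ^{2n}, is a strict contactomorphism: the pullback under ψ_W of the 1-form (1/2)(x dy - y dx) + 2z dw + w dz equals (1/2)(x dy - y dx) + p dq + dζ. -/

import Mathlib

noncomputable section

open Finset

def dot {m : ℕ} (a b : Fin m → ℝ) : ℝ := ∑ i, a i * b i

/-- Coordinates `(x, y, z, w)` on `ℝ^{2n}` with `a` pairs `(x,y)` and `b` pairs `(z,w)`. -/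
abbrev Ecoord (a b : ℕ) := (Fin a → ℝ) × (Fin a → ℝ) × (Fin b → ℝ) × (Fin b → ℝ)

/-- The contact form `α = (1/2)(x dy - y dx) + 2 z dw + w dz` (restricted to `S₋₁`). -/
def alphaForm {a b : ℕ} (p v : Ecoord a b) : ℝ :=
  (1/2) * (dot p.1 v.2.1 - dot p.2.1 v.1) + 2 * dot p.2.2.1 v.2.2.2 + dot p.2.2.2 v.2.2.1

/-- Coordinates `(ζ, q, p, x, y)` on `ℝ × T*S^k × ℝ^{2(n-k-1)}` (ambiently, on
`ℝ × ℝ^{k+1} × ℝ^{k+1} × ℝ^{a} × ℝ^{a}`). -/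
abbrev Dom (k a : ℕ) := ℝ × (Fin (k+1) → ℝ) × (Fin (k+1) → ℝ) × (Fin a → ℝ) × (Fin a → ℝ)

/-- The map `ψ_W : (ζ, q, p, x, y) ↦ (x, y; ζq + p, q)` into `S₋₁ = {|w|² = 1}`. -/
def psiW {k a : ℕ} (d : Dom k a) : Ecoord a (k+1) :=
  (d.2.2.2.1, d.2.2.2.2, d.1 • d.2.1 + d.2.2.1, d.2.1)

lemma dot_add_left {m : ℕ} (u v w : Fin m → ℝ) :
    dot (u + v) w = dot u w + dot v w := by
  simp [dot, add_mul, Finset.sum_add_distrib]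

lemma dot_smul_left {m : ℕ} (c : ℝ) (u w : Fin m → ℝ) :
    dot (c • u) w = c * dot u w := by
  simp [dot, Finset.mul_sum, mul_assoc]

lemma dot_add_right {m : ℕ} (u v w : Fin m → ℝ) :
    dot u (v + w) = dot u v + dot u w := by
  simp [dot, mul_add, Finset.sum_add_distrib]

lemma dot_smul_right {m : ℕ} (c : ℝ) (u w : Fin m → ℝ) :
    dot u (c • w) = c * dot u w := by
  simp only [dot, Pi.smul_apply, smul_eq_mul, Finset.mul_sum]; exact Finset.sum_congr rfl fun i _ => by ring

lemma dot_comm {m : ℕ} (u v : Fin m → ℝ) : dot u v = dot v u := by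
  simp [dot, mul_comm]

lemma psiW_fderiv {k a : ℕ} (d t : Dom k a) :
    fderiv ℝ (psiW (k := k) (a := a)) d t =
      (t.2.2.2.1, t.2.2.2.2, t.1 • d.2.1 + d.1 • t.2.1 + t.2.2.1, t.2.1) := by
  have hζ : HasFDerivAt (fun d : Dom k a => d.1) (ContinuousLinearMap.fst ℝ _ _) d :=
    hasFDerivAt_fst
  have hrest := hasFDerivAt_snd (𝕜 := ℝ) (p := d)
  have hq : HasFDerivAt (fun d : Dom k a => d.2.1) _ d := hasFDerivAt_fst.comp d hrest
  have hr2 : HasFDerivAt (fun d : Dom k a => d.2.2) _ d := hasFDerivAt_snd.comp d hrest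
  have hp : HasFDerivAt (fun d : Dom k a => d.2.2.1) _ d := hasFDerivAt_fst.comp d hr2
  have hr3 : HasFDerivAt (fun d : Dom k a => d.2.2.2) _ d := hasFDerivAt_snd.comp d hr2
  have hx : HasFDerivAt (fun d : Dom k a => d.2.2.2.1) _ d := hasFDerivAt_fst.comp d hr3
  have hy : HasFDerivAt (fun d : Dom k a => d.2.2.2.2) _ d := hasFDerivAt_snd.comp d hr3
  have hz : HasFDerivAt (fun d : Dom k a => d.1 • d.2.1 + d.2.2.1) _ d := (hζ.smul hq).add hp
  have H : HasFDerivAt (psiW (k := k) (a := a)) _ d := hx.prodMk (hy.prodMk (hz.prodMk hq))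
  rw [H.fderiv]
  simp
  abel

/-- `ψ_W` is a strict contactomorphism: the pullback of
`(1/2)(x dy - y dx) + 2z dw + w dz` under `ψ_W` equals `(1/2)(x dy - y dx) + p dq + dζ`
(on points of `T*S^k`, i.e. `q·q = 1`, `q·p = 0`, and tangent vectors thereof). -/
theorem stmt4 (k a : ℕ) (d : Dom k a)
    (hq : dot d.2.1 d.2.1 = 1) (hqp : dot d.2.1 d.2.2.1 = 0)
    (t : Dom k a)
    (htq : dot d.2.1 t.2.1 = 0)
    (htp : dot t.2.1 d.2.2.1 + dot d.2.1 t.2.2.1 = 0) :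
    alphaForm (psiW d) (fderiv ℝ (psiW (k := k) (a := a)) d t) =
      (1/2) * (dot d.2.2.2.1 t.2.2.2.2 - dot d.2.2.2.2 t.2.2.2.1)
        + dot d.2.2.1 t.2.1 + t.1 := by
  rw [psiW_fderiv]
  have hc : dot d.2.1 t.2.2.1 = - dot d.2.2.1 t.2.1 := by
    rw [dot_comm t.2.1] at htp; linarith
  simp only [alphaForm, psiW, dot_add_left, dot_smul_left, dot_add_right, dot_smul_right,
    hq, htq, hc]
  ring
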